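/- For every quadruple ε = (ε₁, ε₂, ε₃, ε₄) with each εᵢ ∈ {+1, −1}, every integer n, and each i ∈ {1, 2, 3}, the reduced word representing Φ_{ε,n}(aᵢ) in F contains exactly one letter from {a_{i+1}, a_{i+1}⁻¹} and contains no letter a_j or a_j⁻¹ with j > i + 1. -/

import Mathlib

/-! `F` is the free group on four generators `a₁, a₂, a₃, a₄`;
here `a 0 = a₁`, `a 1 = a₂`, `a 2 = a₃`, `a 3 = a₄`. -/

abbrev F : Type := FreeGroup (Fin 4)

def a (i : Fin 4) : F := FreeGroup.of i

/-- `Δ i ε` is the endomorphism `Δ_{i+1}^ε` of `F` induced by the `ε`-th power of the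
Dehn twist `D_{i+1}` (the index is shifted by one): `Δ 0 ε = Δ₁^ε`, …, `Δ 4 ε = Δ₅^ε`. -/
def Δ : Fin 5 → ℤ → (F →* F) := fun i ε =>
  FreeGroup.lift (![
    ![a 0, a 1 * a 0 ^ ε, a 2, a 3],
    ![a 0 * a 1 ^ (-ε), a 1, a 2, a 3],
    ![a 0, ((a 2)⁻¹ * a 0) ^ ε * a 1, a 2, ((a 2)⁻¹ * a 0) ^ ε * a 3],
    ![a 0, a 1, a 2 * a 3 ^ ε, a 3],
    ![a 0, a 1, a 2, a 3 * a 2 ^ (-ε)]] i)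

lemma Δ_inv_comp (i : Fin 5) (ε : ℤ) :
    (Δ i (-ε)).comp (Δ i ε) = MonoidHom.id F := by
  apply FreeGroup.ext_hom
  intro j
  fin_cases i <;> fin_cases j <;>
    simp [Δ, a, MonoidHom.comp_apply]

/-- `Δ i ε` as an automorphism of `F` (its inverse is `Δ i (-ε)`). -/
def Δaut (i : Fin 5) (ε : ℤ) : F ≃* F where
  toFun := Δ i ε
  invFun := Δ i (-ε)
  left_inv := fun x => by
    simpa using congrArg (fun f : F →* F => f x) (Δ_inv_comp i ε)
  right_inv := fun x => by
    have h := congrArg (fun f : F →* F => f x) (Δ_inv_comp i (-ε))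
    rw [neg_neg] at h
    simpa using h
  map_mul' := map_mul _

/-- The automorphism `Φ_{ε,n} = Δ₂^{ε₂} ∘ Δ₁^{ε₁} ∘ Δ₃^{ε₃} ∘ Δ₄^{ε₄} ∘ (Δ₅^{+1})^n` of `F`
(multiplication of automorphisms is composition). -/
def Φ (ε₁ ε₂ ε₃ ε₄ n : ℤ) : F ≃* F :=
  Δaut 1 ε₂ * Δaut 0 ε₁ * Δaut 2 ε₃ * Δaut 3 ε₄ * (Δaut 4 1) ^ n


section Aux

lemma d32 (ε : ℤ) : Δaut 3 ε (a 2) = a 2 * a 3 ^ ε := by simp [Δaut, Δ, a]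
lemma d21 (ε : ℤ) : Δaut 2 ε (a 1) = ((a 2)⁻¹ * a 0) ^ ε * a 1 := by simp [Δaut, Δ, a]
lemma d23 (ε : ℤ) : Δaut 2 ε (a 3) = ((a 2)⁻¹ * a 0) ^ ε * a 3 := by simp [Δaut, Δ, a]
lemma d10 (ε : ℤ) : Δaut 1 ε (a 0) = a 0 * a 1 ^ (-ε) := by simp [Δaut, Δ, a]
lemma d01 (ε : ℤ) : Δaut 0 ε (a 1) = a 1 * a 0 ^ ε := by simp [Δaut, Δ, a]
lemma d30 (ε : ℤ) : Δaut 3 ε (a 0) = a 0 := by simp [Δaut, Δ, a]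
lemma d31 (ε : ℤ) : Δaut 3 ε (a 1) = a 1 := by simp [Δaut, Δ, a]
lemma d33 (ε : ℤ) : Δaut 3 ε (a 3) = a 3 := by simp [Δaut, Δ, a]
lemma d20 (ε : ℤ) : Δaut 2 ε (a 0) = a 0 := by simp [Δaut, Δ, a]
lemma d22 (ε : ℤ) : Δaut 2 ε (a 2) = a 2 := by simp [Δaut, Δ, a]
lemma d00 (ε : ℤ) : Δaut 0 ε (a 0) = a 0 := by simp [Δaut, Δ, a]
lemma d02 (ε : ℤ) : Δaut 0 ε (a 2) = a 2 := by simp [Δaut, Δ, a]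
lemma d03 (ε : ℤ) : Δaut 0 ε (a 3) = a 3 := by simp [Δaut, Δ, a]
lemma d11 (ε : ℤ) : Δaut 1 ε (a 1) = a 1 := by simp [Δaut, Δ, a]
lemma d12 (ε : ℤ) : Δaut 1 ε (a 2) = a 2 := by simp [Δaut, Δ, a]
lemma d13 (ε : ℤ) : Δaut 1 ε (a 3) = a 3 := by simp [Δaut, Δ, a]

lemma hpow4 (j : Fin 4) (hj : (j : ℕ) < 3) (m : ℤ) : ((Δaut 4 1) ^ m) (a j) = a j := by
  have h1 : (Δaut 4 1) (a j) = a j := by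
    fin_cases j
    · rfl
    · rfl
    · rfl
    · exact absurd hj (by norm_num)
  have h2 : (Δaut 4 1)⁻¹ (a j) = a j := by
    conv_lhs => rw [← h1]
    exact (Δaut 4 1).symm_apply_apply (a j)
  induction m using Int.induction_on with
  | zero => rfl
  | succ k ih =>
    rw [zpow_add_one]
    show ((Δaut 4 1) ^ (k : ℤ)) ((Δaut 4 1) (a j)) = _
    rw [h1, ih]
  | pred k ih =>
    rw [zpow_sub_one]
    show ((Δaut 4 1) ^ (-k : ℤ)) ((Δaut 4 1)⁻¹ (a j)) = _
    rw [h2, ih]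

lemma phi_eval (ε₁ ε₂ ε₃ ε₄ n : ℤ) (j : Fin 4) (hj : (j : ℕ) < 3) :
    Φ ε₁ ε₂ ε₃ ε₄ n (a j) =
      (Δaut 1 ε₂) ((Δaut 0 ε₁) ((Δaut 2 ε₃) ((Δaut 3 ε₄) (a j)))) := by
  show (Δaut 1 ε₂) ((Δaut 0 ε₁) ((Δaut 2 ε₃) ((Δaut 3 ε₄) (((Δaut 4 1) ^ n) (a j))))) = _
  rw [hpow4 j hj]

end Aux

/-- For `i ∈ {1, 2, 3}` (here `i : Fin 4` with `(i : ℕ) < 3`, so `a i = a_{i+1}` in the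
paper's numbering), the reduced word of `Φ_{ε,n}(aᵢ)` contains exactly one letter
`a_{i+1}^{±1}` and no letter `a_j^{±1}` with `j > i + 1`. -/
theorem phi_reduced_word (ε₁ ε₂ ε₃ ε₄ : ℤ)
    (h₁ : ε₁ = 1 ∨ ε₁ = -1) (h₂ : ε₂ = 1 ∨ ε₂ = -1)
    (h₃ : ε₃ = 1 ∨ ε₃ = -1) (h₄ : ε₄ = 1 ∨ ε₄ = -1) (n : ℤ)
    (i : Fin 4) (hi : (i : ℕ) < 3) :
    ((Φ ε₁ ε₂ ε₃ ε₄ n (a i)).toWord.countP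
        (fun l => (l.1 : ℕ) = (i : ℕ) + 1) = 1) ∧
    ∀ l ∈ (Φ ε₁ ε₂ ε₃ ε₄ n (a i)).toWord, (l.1 : ℕ) ≤ (i : ℕ) + 1 := by
  rw [phi_eval ε₁ ε₂ ε₃ ε₄ n i hi]
  fin_cases i
  · rw [show ((⟨0, by norm_num⟩ : Fin 4) : Fin 4) = 0 from rfl]
    simp only [d30, d20, d00, d10]
    rcases h₂ with rfl | rfl <;> decide
  · rw [show ((⟨1, by norm_num⟩ : Fin 4) : Fin 4) = 1 from rfl]
    simp only [d31, d21, map_mul, map_inv, map_zpow, d02, d00, d01, d12, d10, d11]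
    rcases h₁ with rfl | rfl <;> rcases h₂ with rfl | rfl <;> rcases h₃ with rfl | rfl <;> decide
  · rw [show ((⟨2, by norm_num⟩ : Fin 4) : Fin 4) = 2 from rfl]
    simp only [d32, map_mul, map_inv, map_zpow, d22, d23, d20, d02, d00, d03, d12, d10, d13]
    rcases h₂ with rfl | rfl <;> rcases h₃ with rfl | rfl <;> rcases h₄ with rfl | rfl <;> decide
  · exact absurd hi (by norm_num)
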